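/- arXiv:2304.04296 — 3 statements merged into one kernel-verified Lean document; each statement's English description precedes it below -/
import Mathlib

section
/- If a graph G has no pair of non-adjacent twins and no vertex cutset that is an independent set of size at most two, and G is a member of the closure class C, then G has at most two vertices. In particular, every graph in C on at least three vertices has a pair of non-adjacent twins or an independent vertex cutset of size at most two. -/
/-- A structured tree: a rooted tree together with, at each internal node,
a graph on its children. A `leaf` is a tree with a single (leaf) node; a
`node ι c g` has children indexed by `ι`, subtrees `c i`, and the graph `g`
on the children. -/
inductive STree : Type 1 where
  | leaf : STree
  | node : (ι : Type) → (ι → STree) → SimpleGraph ι → STree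

namespace STree

/-- The type of nodes of a structured tree. -/
def NodeType : STree → Type
  | leaf => PUnit
  | node ι c _ => PUnit ⊕ Σ i : ι, NodeType (c i)

/-- The type of branches (root-to-leaf paths) of a structured tree. -/
def Branch : STree → Type
  | leaf => PUnit
  | node _ c _ => Σ i, Branch (c i)

/-- The root of a structured tree, as a node. -/
def root : (t : STree) → t.NodeType
  | leaf => PUnit.unit
  | node _ _ _ => Sum.inl PUnit.unit

/-- `onBranch t b u` means that the node `u` lies on the branch `b`. -/
def onBranch : (t : STree) → t.Branch → t.NodeType → Prop
  | leaf, _, _ => True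
  | node _ c _, ⟨i, b⟩, u =>
      match u with
      | Sum.inl _ => True
      | Sum.inr ⟨j, w⟩ => ∃ h : j = i, onBranch (c i) b (h ▸ w)

/-- Adjacency between tree nodes in the realization: the union of the edges
of the graphs `g(v)` placed on the children of each internal node `v`
(tree edges are *not* included). -/
def treeAdj : (t : STree) → t.NodeType → t.NodeType → Prop
  | leaf, _, _ => False
  | node ι c g, u, v =>
      match u, v with
      | Sum.inr ⟨i, u'⟩, Sum.inr ⟨j, v'⟩ =>
          (∃ h : i = j, treeAdj (c j) (h ▸ u') v') ∨
          (g.Adj i j ∧ u' = root (c i) ∧ v' = root (c j))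
      | _, _ => False

/-- The realization `R(T,g)` of a structured tree: its vertices are the tree
nodes together with the branches; edges are those of the graphs `g(v)`, plus
an edge from each branch vertex to every tree node lying on that branch. -/
def realization (t : STree) : SimpleGraph (t.NodeType ⊕ t.Branch) :=
  SimpleGraph.fromRel (fun x y =>
    match x, y with
    | Sum.inl u, Sum.inl v => treeAdj t u v
    | Sum.inl u, Sum.inr b => onBranch t b u
    | Sum.inr b, Sum.inl u => onBranch t b u
    | Sum.inr _, Sum.inr _ => False)

/-- The level of a node (the root is at level 1). -/
def level : (t : STree) → t.NodeType → ℕ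
  | leaf, _ => 1
  | node _ c _, u =>
      match u with
      | Sum.inl _ => 1
      | Sum.inr ⟨i, w⟩ => level (c i) w + 1

/-- `IsInternalGraphOf t ⟨ι, g⟩` means that `g` is the graph attached to some
internal node of `t` (on its children, indexed by `ι`). -/
inductive IsInternalGraphOf : STree → (Σ ι : Type, SimpleGraph ι) → Prop where
  | here : ∀ (ι : Type) (c : ι → STree) (g : SimpleGraph ι),
      IsInternalGraphOf (node ι c g) ⟨ι, g⟩
  | child : ∀ (ι : Type) (c : ι → STree) (g : SimpleGraph ι) (i : ι) (p),
      IsInternalGraphOf (c i) p → IsInternalGraphOf (node ι c g) p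

end STree

/-- Builds the structured tree in which all nodes at level `i` carry the
`i`-th graph of the list on their children (so the tree has `L.length + 1`
levels). -/
def buildTree : List (Σ V : Type, SimpleGraph V) → STree
  | [] => .leaf
  | ⟨ι, g⟩ :: rest => .node ι (fun _ => buildTree rest) g

/-- The realization of a structured tree, packaged with its vertex type. -/
def realizationSigma (t : STree) : Σ V : Type, SimpleGraph V :=
  ⟨t.NodeType ⊕ t.Branch, t.realization⟩

/-- `twincutList m` is the list `[G₂, G₃, …, G_{m+1}]` of twincut graphs. -/
def twincutList : ℕ → List (Σ V : Type, SimpleGraph V)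
  | 0 => []
  | m + 1 => twincutList m ++ [realizationSigma (buildTree (twincutList m))]

/-- The structured tree `T_{m+2}` whose realization is the twincut graph
`G_{m+2}`: it has `m + 1` levels, and every node at level `i ≤ m` carries
the graph `G_{i+1}` on its children. -/
def twincutTree (m : ℕ) : STree := buildTree (twincutList m)

/-- The twincut graphs: `G 1` is the one-vertex graph, and for `k ≥ 2`,
`G k` is the realization of the structured tree `T_k`. -/
def twincutG : ℕ → Σ V : Type, SimpleGraph V
  | 0 => ⟨PUnit, ⊥⟩
  | 1 => ⟨PUnit, ⊥⟩
  | (m + 2) => realizationSigma (twincutTree m)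

/-- Vertex replication: add a new vertex (a non-adjacent twin of `v`) with the
same neighborhood as `v`, non-adjacent to `v`. Equivalently, substitute `v`
by an independent set of size two. -/
def replicateGraph {V : Type} (G : SimpleGraph V) (v : V) : SimpleGraph (V ⊕ Unit) :=
  SimpleGraph.fromRel (fun x y =>
    match x, y with
    | Sum.inl a, Sum.inl b => G.Adj a b
    | Sum.inl a, Sum.inr _ => G.Adj a v
    | Sum.inr _, Sum.inl b => G.Adj v b
    | Sum.inr _, Sum.inr _ => False)

/-- Gluing the graphs `G` and `H` along the set `S`, embedded in `G` via `f`
and in `H` via `h`: the two copies of `S` are identified. -/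
def glueGraphs {V W S : Type} (G : SimpleGraph V) (H : SimpleGraph W)
    (f : S → V) (h : S → W) : SimpleGraph (V ⊕ {w : W // w ∉ Set.range h}) :=
  SimpleGraph.fromRel (fun x y =>
    match x, y with
    | Sum.inl a, Sum.inl b => G.Adj a b
    | Sum.inl a, Sum.inr w => ∃ s, f s = a ∧ H.Adj (h s) w.val
    | Sum.inr w, Sum.inl a => ∃ s, f s = a ∧ H.Adj (h s) w.val
    | Sum.inr w, Sum.inr w' => H.Adj w.val w'.val)

/-- The class `𝒞`: the smallest class of graphs (closed under isomorphism)
containing all graphs on at most two vertices, closed under vertex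
replication (adding a non-adjacent twin) and under gluing two of its members
along an independent set of size at most two. -/
inductive InC : ∀ V : Type, SimpleGraph V → Prop where
  | small (V : Type) (G : SimpleGraph V) : Finite V → Nat.card V ≤ 2 → InC V G
  | iso (V W : Type) (G : SimpleGraph V) (H : SimpleGraph W) :
      InC V G → Nonempty (G ≃g H) → InC W H
  | replicate (V : Type) (G : SimpleGraph V) (v : V) :
      InC V G → InC (V ⊕ Unit) (replicateGraph G v)
  | glue (V W S : Type) (G : SimpleGraph V) (H : SimpleGraph W) (f : S → V) (h : S → W) :
      InC V G → InC W H → Function.Injective f → Function.Injective h →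
      Finite S → Nat.card S ≤ 2 →
      (∀ s s' : S, ¬ G.Adj (f s) (f s')) → (∀ s s' : S, ¬ H.Adj (h s) (h s')) →
      InC (V ⊕ {w : W // w ∉ Set.range h}) (glueGraphs G H f h)

/-- `G` has a pair of non-adjacent twins: two distinct non-adjacent vertices
with the same neighborhood. -/
def HasNonadjTwins {V : Type} (G : SimpleGraph V) : Prop :=
  ∃ u v : V, u ≠ v ∧ ¬ G.Adj u v ∧ ∀ w, G.Adj u w ↔ G.Adj v w

/-- `G` has a vertex cutset which is an independent set of size at most two:
a set `S` of at most two pairwise non-adjacent vertices whose removal leaves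
a disconnected graph. -/
def HasSmallIndepCutset {V : Type} (G : SimpleGraph V) : Prop :=
  ∃ S : Set V, S.ncard ≤ 2 ∧ (∀ a ∈ S, ∀ b ∈ S, ¬ G.Adj a b) ∧
    ¬ (G.induce Sᶜ).Connected


section Aux

open SimpleGraph

lemma hasNonadjTwins_of_iso {V W : Type} {G : SimpleGraph V} {H : SimpleGraph W}
    (e : G ≃g H) (hT : HasNonadjTwins G) : HasNonadjTwins H := by
  obtain ⟨u, v, huv, hadj, htw⟩ := hT
  refine ⟨e u, e v, fun hc => huv (e.injective hc), fun hc => hadj (e.map_rel_iff.mp hc),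
    fun w => ?_⟩
  have h1 : H.Adj (e u) w ↔ G.Adj u (e.symm w) := by
    conv_lhs => rw [show w = e (e.symm w) by simp]
    exact e.map_rel_iff
  have h2 : H.Adj (e v) w ↔ G.Adj v (e.symm w) := by
    conv_lhs => rw [show w = e (e.symm w) by simp]
    exact e.map_rel_iff
  rw [h1, h2]
  exact htw _

/-- An isomorphism induces an isomorphism between induced subgraphs. -/
def isoInduce {V W : Type} {G : SimpleGraph V} {H : SimpleGraph W} (e : G ≃g H) (A : Set V) :
    G.induce A ≃g H.induce (e.toEquiv '' A) where
  toEquiv := e.toEquiv.image A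
  map_rel_iff' := by
    intro a b
    simp only [Equiv.image, Equiv.coe_fn_mk, comap_adj, Function.Embedding.coe_subtype]
    exact e.map_rel_iff

lemma hasSmallIndepCutset_of_iso {V W : Type} {G : SimpleGraph V} {H : SimpleGraph W}
    (e : G ≃g H) (hC : HasSmallIndepCutset G) : HasSmallIndepCutset H := by
  obtain ⟨S, hS2, hSind, hSdisc⟩ := hC
  refine ⟨e.toEquiv '' S, ?_, ?_, ?_⟩
  · rw [Set.ncard_image_of_injective S e.toEquiv.injective]; exact hS2
  · rintro a ⟨x, hx, rfl⟩ b ⟨y, hy, rfl⟩ hadj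
    exact hSind x hx y hy (e.map_rel_iff.mp hadj)
  · intro hconn
    apply hSdisc
    have hset : (e.toEquiv '' S)ᶜ = e.toEquiv '' Sᶜ := by
      rw [Set.image_compl_eq e.toEquiv.bijective]
    rw [hset] at hconn
    exact ((isoInduce e Sᶜ).connected_iff).mpr hconn

lemma replicateGraph_twins {V : Type} (G : SimpleGraph V) (v : V) :
    HasNonadjTwins (replicateGraph G v) := by
  refine ⟨Sum.inl v, Sum.inr (), by simp, ?_, ?_⟩
  · rw [replicateGraph, SimpleGraph.fromRel_adj]
    simp
  · intro w
    cases w with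
    | inl b =>
      by_cases hb : b = v
      · subst hb
        rw [replicateGraph]
        simp [SimpleGraph.fromRel_adj]
      · have hvb : v ≠ b := fun hvb => hb hvb.symm
        rw [replicateGraph]
        simp [SimpleGraph.fromRel_adj, hvb]
    | inr u =>
      cases u
      rw [replicateGraph]
      simp [SimpleGraph.fromRel_adj]

section GlueAdj

variable {V W S : Type} {G : SimpleGraph V} {H : SimpleGraph W} {f : S → V} {h : S → W}

lemma glue_adj_inl_inl (a b : V) :
    (glueGraphs G H f h).Adj (Sum.inl a) (Sum.inl b) ↔ G.Adj a b := by
  rw [glueGraphs, SimpleGraph.fromRel_adj]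
  constructor
  · rintro ⟨-, hc | hc⟩
    · exact hc
    · exact hc.symm
  · intro hab
    exact ⟨by simp [hab.ne], Or.inl hab⟩

lemma glue_adj_inl_inr (a : V) (w : {w : W // w ∉ Set.range h}) :
    (glueGraphs G H f h).Adj (Sum.inl a) (Sum.inr w) ↔
      ∃ s, f s = a ∧ H.Adj (h s) w.val := by
  rw [glueGraphs, SimpleGraph.fromRel_adj]
  simp

lemma glue_adj_inr_inl (a : V) (w : {w : W // w ∉ Set.range h}) :
    (glueGraphs G H f h).Adj (Sum.inr w) (Sum.inl a) ↔
      ∃ s, f s = a ∧ H.Adj (h s) w.val := by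
  rw [glueGraphs, SimpleGraph.fromRel_adj]
  simp

lemma glue_adj_inr_inr (w w' : {w : W // w ∉ Set.range h}) :
    (glueGraphs G H f h).Adj (Sum.inr w) (Sum.inr w') ↔ H.Adj w.val w'.val := by
  rw [glueGraphs, SimpleGraph.fromRel_adj]
  constructor
  · rintro ⟨-, hc | hc⟩
    · exact hc
    · exact hc.symm
  · intro hadj
    refine ⟨?_, Or.inl hadj⟩
    intro hc
    rw [Sum.inr.injEq] at hc
    exact hadj.ne (congrArg Subtype.val hc)

end GlueAdj

lemma inC_key : ∀ (V : Type) (G : SimpleGraph V), InC V G →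
    3 ≤ Nat.card V → HasNonadjTwins G ∨ HasSmallIndepCutset G := by
  intro V G hG
  induction hG with
  | small V G hfin hcard =>
    intro h3; omega
  | iso V W G H hG hiso ih =>
    intro h3
    obtain ⟨e⟩ := hiso
    have h3' : 3 ≤ Nat.card V := by
      rwa [Nat.card_congr e.toEquiv]
    rcases ih h3' with hT | hC
    · exact Or.inl (hasNonadjTwins_of_iso e hT)
    · exact Or.inr (hasSmallIndepCutset_of_iso e hC)
  | replicate V G v hG ih =>
    intro _
    exact Or.inl (replicateGraph_twins G v)
  | glue V W S G H f h hG hH hf hh hSfin hS2 hGind hHind ihG ihH =>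
    intro h3
    by_cases hsub : Nonempty {w : W // w ∉ Set.range h}
    · by_cases hsurj : Function.Surjective f
      · -- `f` is surjective: the glued graph is isomorphic to `H`.
        have bf : Function.Bijective f := ⟨hf, hsurj⟩
        let eV : V ≃ {w : W // w ∈ Set.range h} :=
          (Equiv.ofBijective f bf).symm.trans (Equiv.ofInjective h hh)
        haveI : DecidablePred (· ∈ Set.range h) := Classical.decPred _
        let e1 : (V ⊕ {w : W // w ∉ Set.range h}) ≃ W :=
          (Equiv.sumCongr eV (Equiv.refl _)).trans (Equiv.sumCompl _)
        have he1l : ∀ a : V, e1 (Sum.inl a) = h ((Equiv.ofBijective f bf).symm a) := by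
          intro a
          simp [e1, eV, Equiv.ofInjective]
        have he1r : ∀ w : {w : W // w ∉ Set.range h}, e1 (Sum.inr w) = w.val := by
          intro w
          simp [e1]
        have hfa : ∀ a : V, f ((Equiv.ofBijective f bf).symm a) = a := by
          intro a
          exact (Equiv.ofBijective f bf).apply_symm_apply a
        have e : (glueGraphs G H f h) ≃g H := by
          refine ⟨e1, ?_⟩
          rintro (a | w) (b | w')
          · rw [he1l, he1l]
            refine iff_of_false (hHind _ _) ?_
            rw [glue_adj_inl_inl]
            conv in G.Adj _ _ => rw [← hfa a, ← hfa b]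
            exact hGind _ _
          · rw [he1l, he1r, glue_adj_inl_inr]
            constructor
            · intro hadj
              exact ⟨_, hfa a, hadj⟩
            · rintro ⟨s, hs, hadj⟩
              have : s = (Equiv.ofBijective f bf).symm a := hf (by rw [hs, hfa])
              rwa [← this]
          · rw [he1l, he1r, glue_adj_inr_inl]
            constructor
            · intro hadj
              exact ⟨_, hfa b, hadj.symm⟩
            · rintro ⟨s, hs, hadj⟩
              have : s = (Equiv.ofBijective f bf).symm b := hf (by rw [hs, hfa])
              rw [← this]
              exact hadj.symm
          · rw [he1r, he1r, glue_adj_inr_inr]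
        have h3' : 3 ≤ Nat.card W := by rwa [← Nat.card_congr e1]
        rcases ihH h3' with hT | hC
        · exact Or.inl (hasNonadjTwins_of_iso e.symm hT)
        · exact Or.inr (hasSmallIndepCutset_of_iso e.symm hC)
      · -- Non-degenerate case: `Sum.inl '' Set.range f` is a small independent cutset.
        right
        rw [Function.Surjective] at hsurj
        push_neg at hsurj
        obtain ⟨v₀, hv₀⟩ := hsurj
        obtain ⟨w₀⟩ := hsub
        refine ⟨Sum.inl '' Set.range f, ?_, ?_, ?_⟩
        · have h1 : (Sum.inl '' Set.range f :
              Set (V ⊕ {w : W // w ∉ Set.range h})).ncard = (Set.range f).ncard :=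
            Set.ncard_image_of_injective _ Sum.inl_injective
          have h2 : (Set.range f).ncard = Nat.card S := by
            rw [← Set.image_univ, Set.ncard_image_of_injective _ hf, Set.ncard_univ]
          omega
        · rintro a ⟨x, ⟨s, rfl⟩, rfl⟩ b ⟨y, ⟨s', rfl⟩, rfl⟩ hadj
          exact hGind s s' ((glue_adj_inl_inl _ _).mp hadj)
        · intro hconn
          have hxmem : (Sum.inl v₀ : V ⊕ {w : W // w ∉ Set.range h}) ∈
              (Sum.inl '' Set.range f)ᶜ := by
            rintro ⟨x, ⟨s, rfl⟩, hxe⟩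
            exact hv₀ s (Sum.inl_injective hxe)
          have hymem : (Sum.inr w₀ : V ⊕ {w : W // w ∉ Set.range h}) ∈
              (Sum.inl '' Set.range f)ᶜ := by
            rintro ⟨x, hx, hxe⟩
            simp at hxe
          have claim : ∀ (a b : ↑((Sum.inl '' Set.range f :
                Set (V ⊕ {w : W // w ∉ Set.range h}))ᶜ))
              (q : ((glueGraphs G H f h).induce _).Walk a b),
              a.val.isLeft = b.val.isLeft := by
            intro a b q
            induction q with
            | nil => rfl
            | @cons u v w hadj q ih =>
              rw [← ih]
              have hadj' : (glueGraphs G H f h).Adj u.val v.val := hadj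
              obtain ⟨uv, hu⟩ := u
              obtain ⟨vv, hv⟩ := v
              match uv, vv with
              | Sum.inl a', Sum.inl b' => rfl
              | Sum.inr w', Sum.inr w'' => rfl
              | Sum.inl a', Sum.inr w' =>
                obtain ⟨s, hs, -⟩ := (glue_adj_inl_inr _ _).mp hadj'
                exact absurd ⟨f s, ⟨s, rfl⟩, by rw [hs]⟩ hu
              | Sum.inr w', Sum.inl a' =>
                obtain ⟨s, hs, -⟩ := (glue_adj_inr_inl _ _).mp hadj'
                exact absurd ⟨f s, ⟨s, rfl⟩, by rw [hs]⟩ hv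
          have hreach := hconn.preconnected ⟨Sum.inl v₀, hxmem⟩ ⟨Sum.inr w₀, hymem⟩
          obtain ⟨p⟩ := hreach
          have := claim _ _ p
          simp at this
    · -- The right side is empty: the glued graph is isomorphic to `G`.
      haveI hie : IsEmpty {w : W // w ∉ Set.range h} := not_nonempty_iff.mp hsub
      have bsurj : Function.Surjective
          (Sum.inl : V → V ⊕ {w : W // w ∉ Set.range h}) := by
        rintro (x | y)
        · exact ⟨x, rfl⟩
        · exact (hie.false y).elim
      let e1 : V ≃ (V ⊕ {w : W // w ∉ Set.range h}) :=
        Equiv.ofBijective Sum.inl ⟨Sum.inl_injective, bsurj⟩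
      have e : G ≃g glueGraphs G H f h := by
        refine ⟨e1, ?_⟩
        intro a b
        exact glue_adj_inl_inl a b
      have h3' : 3 ≤ Nat.card V := by rwa [Nat.card_congr e1]
      rcases ihG h3' with hT | hC
      · exact Or.inl (hasNonadjTwins_of_iso e hT)
      · exact Or.inr (hasSmallIndepCutset_of_iso e hC)

end Aux

/-- a graph in `𝒞` with no pair of non-adjacent twins and no
independent vertex cutset of size at most two has at most two vertices; in
particular every graph of `𝒞` on at least three vertices has non-adjacent
twins or an independent cutset of size at most two. -/
theorem inC_structure (V : Type) (G : SimpleGraph V) (hG : InC V G) :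
    (¬ HasNonadjTwins G → ¬ HasSmallIndepCutset G → Nat.card V ≤ 2) ∧
    (3 ≤ Nat.card V → HasNonadjTwins G ∨ HasSmallIndepCutset G) := by
  have key := inC_key V G hG
  refine ⟨?_, key⟩
  intro h1 h2
  by_contra hc
  rcases key (by omega) with h | h
  · exact h1 h
  · exact h2 h
end

section
/- The 3-dimensional cube graph Q_3 has no pair of non-adjacent twins and no independent vertex cutset of size at most two; consequently Q_3 is not an induced subgraph of any twincut graph. -/
/-- The 3-dimensional cube graph `Q₃` on the 8 vertices `Fin 3 → Bool`:
two vertices are adjacent when they differ in exactly one coordinate. -/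
def cubeGraph : SimpleGraph (Fin 3 → Bool) :=
  SimpleGraph.fromRel (fun x y => ∃! i, x i ≠ y i)


/-! ### Auxiliary material for the proof -/

section CubeFacts

instance cubeAdjDec : DecidableRel cubeGraph.Adj := fun x y =>
  decidable_of_iff (x ≠ y ∧ ((∃ i, x i ≠ y i ∧ ∀ j, x j ≠ y j → j = i) ∨
      (∃ i, y i ≠ x i ∧ ∀ j, y j ≠ x j → j = i)))
    (by rw [cubeGraph, SimpleGraph.fromRel_adj]; rfl)

lemma cube_no_twins : ¬ HasNonadjTwins cubeGraph := by
  unfold HasNonadjTwins; decide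

lemma cube_exists_adj : ∀ x : Fin 3 → Bool, ∃ y, cubeGraph.Adj x y := by decide

/-- Fuel-based reachability in the cube through vertices satisfying `q`. -/
def creach (q : (Fin 3 → Bool) → Prop) : ℕ → (Fin 3 → Bool) → (Fin 3 → Bool) → Prop
  | 0 => Eq
  | n+1 => fun a b => a = b ∨ ∃ c, cubeGraph.Adj a c ∧ q c ∧ creach q n c b

instance creachDec (q : (Fin 3 → Bool) → Prop) [DecidablePred q] :
    ∀ n, ∀ a b, Decidable (creach q n a b)
  | 0, a, b => inferInstanceAs (Decidable (a = b))
  | n+1, a, b =>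
      haveI := creachDec q n
      inferInstanceAs (Decidable (_ ∨ ∃ c, cubeGraph.Adj a c ∧ q c ∧ creach q n c b))

set_option synthInstance.maxSize 2048 in
set_option maxHeartbeats 4000000 in
set_option maxRecDepth 10000 in
/-- The cube minus (at most) two vertices is connected (with explicit fuel). -/
lemma cube_conn : ∀ z w : Option (Fin 3 → Bool), ∀ a b : Fin 3 → Bool,
    some a ≠ z → some a ≠ w → some b ≠ z → some b ≠ w →
    creach (fun c => some c ≠ z ∧ some c ≠ w) 6 a b := by decide

lemma cube_avoid : ∀ z w : Option (Fin 3 → Bool), ∃ v, some v ≠ z ∧ some v ≠ w := by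
  decide

lemma creach_reach {A : Set (Fin 3 → Bool)} {q : (Fin 3 → Bool) → Prop}
    (hq : ∀ c, q c → c ∈ A) :
    ∀ n a b, creach q n a b → ∀ ha : a ∈ A,
      ∃ hb : b ∈ A, (cubeGraph.induce A).Reachable ⟨a, ha⟩ ⟨b, hb⟩ := by
  intro n
  induction n with
  | zero =>
      intro a b hr ha
      have hab : a = b := hr
      subst hab
      exact ⟨ha, SimpleGraph.Reachable.refl _⟩
  | succ n ihn =>
      intro a b hr ha
      have hr' : a = b ∨ ∃ c, cubeGraph.Adj a c ∧ q c ∧ creach q n c b := hr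
      rcases hr' with rfl | ⟨c, hadj, hqc, hrest⟩
      · exact ⟨ha, SimpleGraph.Reachable.refl _⟩
      · have hc : c ∈ A := hq c hqc
        obtain ⟨hb, hreach⟩ := ihn c b hrest hc
        refine ⟨hb, SimpleGraph.Reachable.trans ?_ hreach⟩
        exact SimpleGraph.Adj.reachable (by simpa using hadj)

end CubeFacts

namespace STree

-- characterization lemmas
variable {ι : Type} {c : ι → STree} {g : SimpleGraph ι}

lemma treeAdj_node_iff {i j : ι} {u : (c i).NodeType} {v : (c j).NodeType} :
    (STree.node ι c g).treeAdj (Sum.inr ⟨i, u⟩) (Sum.inr ⟨j, v⟩) ↔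
      (∃ h : i = j, (c j).treeAdj (h ▸ u) v) ∨
      (g.Adj i j ∧ u = root (c i) ∧ v = root (c j)) := Iff.rfl

lemma treeAdj_node_same {i : ι} {u v : (c i).NodeType} :
    (STree.node ι c g).treeAdj (Sum.inr ⟨i, u⟩) (Sum.inr ⟨i, v⟩) ↔ (c i).treeAdj u v := by
  rw [treeAdj_node_iff]
  constructor
  · rintro (⟨h, p⟩ | ⟨hg, -⟩)
    · exact p
    · exact (g.irrefl hg).elim
  · exact fun p => Or.inl ⟨rfl, p⟩

lemma treeAdj_node_diff {i j : ι} (hij : i ≠ j) {u : (c i).NodeType} {v : (c j).NodeType} :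
    (STree.node ι c g).treeAdj (Sum.inr ⟨i, u⟩) (Sum.inr ⟨j, v⟩) ↔
      g.Adj i j ∧ u = root (c i) ∧ v = root (c j) := by
  rw [treeAdj_node_iff]
  constructor
  · rintro (⟨h, -⟩ | h)
    · exact (hij h).elim
    · exact h
  · exact Or.inr

lemma treeAdj_node_inl_left {u : PUnit} {v} :
    ¬ (STree.node ι c g).treeAdj (Sum.inl u) v := by
  cases v <;> exact fun h => h

lemma treeAdj_node_inl_right {u} {v : PUnit} :
    ¬ (STree.node ι c g).treeAdj u (Sum.inl v) := by
  cases u with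
  | inl _ => exact fun h => h
  | inr p => cases p; exact fun h => h

lemma onBranch_node_inl {i : ι} {b : (c i).Branch} {u : PUnit} :
    (STree.node ι c g).onBranch ⟨i, b⟩ (Sum.inl u) := trivial

lemma onBranch_node_same {i : ι} {b : (c i).Branch} {w : (c i).NodeType} :
    (STree.node ι c g).onBranch ⟨i, b⟩ (Sum.inr ⟨i, w⟩) ↔ (c i).onBranch b w := by
  show (∃ h : i = i, (c i).onBranch b (h ▸ w)) ↔ _
  exact ⟨fun ⟨h, p⟩ => p, fun p => ⟨rfl, p⟩⟩

lemma onBranch_node_diff {i j : ι} (hij : j ≠ i) {b : (c i).Branch} {w : (c j).NodeType} :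
    ¬ (STree.node ι c g).onBranch ⟨i, b⟩ (Sum.inr ⟨j, w⟩) := by
  rintro ⟨h, -⟩; exact hij h

lemma treeAdj_root_left : ∀ (t : STree) (v : t.NodeType), ¬ t.treeAdj t.root v
  | leaf, v => fun h => h
  | node ι c g, v => treeAdj_node_inl_left

lemma treeAdj_root_right : ∀ (t : STree) (v : t.NodeType), ¬ t.treeAdj v t.root
  | leaf, v => fun h => h
  | node ι c g, v => treeAdj_node_inl_right

lemma onBranch_root : ∀ (t : STree) (b : t.Branch), t.onBranch b t.root
  | leaf, b => trivial
  | node ι c g, ⟨i, b⟩ => trivial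




variable {ι : Type} {c : ι → STree} {g : SimpleGraph ι}

/-- embed the vertex set of `realization (c i)` into that of the node tree -/
def liftv (c : ι → STree) (g : SimpleGraph ι) (i : ι) :
    ((c i).NodeType ⊕ (c i).Branch) →
      ((STree.node ι c g).NodeType ⊕ (STree.node ι c g).Branch)
  | Sum.inl u => Sum.inl (Sum.inr ⟨i, u⟩)
  | Sum.inr b => Sum.inr ⟨i, b⟩

lemma liftv_inj {i : ι} {y1 y2} (h : liftv c g i y1 = liftv c g i y2) : y1 = y2 := by
  cases y1 with
  | inl u => cases y2 with
    | inl v =>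
        injection h with h; injection h with h
        obtain ⟨-, h2⟩ := Sigma.mk.inj_iff.mp h
        rw [eq_of_heq h2]
    | inr b => exact (Sum.inl_ne_inr h).elim
  | inr b => cases y2 with
    | inl v => exact (Sum.inr_ne_inl h).elim
    | inr b' =>
        injection h with h
        obtain ⟨-, h2⟩ := Sigma.mk.inj_iff.mp h
        rw [eq_of_heq h2]

lemma liftv_part {i j : ι} {y1 y2} (h : liftv c g i y1 = liftv c g j y2) : i = j := by
  cases y1 with
  | inl u => cases y2 with
    | inl v =>
        injection h with h; injection h with h
        exact (Sigma.mk.inj_iff.mp h).1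
    | inr b => exact (Sum.inl_ne_inr h).elim
  | inr b => cases y2 with
    | inl v => exact (Sum.inr_ne_inl h).elim
    | inr b' =>
        injection h with h
        exact (Sigma.mk.inj_iff.mp h).1

lemma liftv_ne_root {i : ι} {y} : liftv c g i y ≠ Sum.inl (Sum.inl PUnit.unit) := by
  cases y with
  | inl u => intro h; injection h with h; exact Sum.inr_ne_inl h
  | inr b => intro h; exact Sum.inr_ne_inl h

lemma liftv_eq_iff {i : ι} {y1 y2} : liftv c g i y1 = liftv c g i y2 ↔ y1 = y2 :=
  ⟨liftv_inj, fun h => by rw [h]⟩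

lemma adj_lift_lift {i : ι} {y1 y2} :
    (STree.node ι c g).realization.Adj (liftv c g i y1) (liftv c g i y2) ↔
      (c i).realization.Adj y1 y2 := by
  cases y1 <;> cases y2 <;>
    simp only [realization, SimpleGraph.fromRel_adj, liftv] <;>
    refine and_congr (not_congr ?_) (or_congr ?_ ?_)
  case inl.inl => exact liftv_eq_iff (y1 := Sum.inl _) (y2 := Sum.inl _)
  case inl.inl.refine_2 => exact treeAdj_node_same
  · exact treeAdj_node_same
  · exact liftv_eq_iff (y1 := Sum.inl _) (y2 := Sum.inr _)
  · exact onBranch_node_same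
  · exact onBranch_node_same
  · exact liftv_eq_iff (y1 := Sum.inr _) (y2 := Sum.inl _)
  · exact onBranch_node_same
  · exact onBranch_node_same
  · exact liftv_eq_iff (y1 := Sum.inr _) (y2 := Sum.inr _)
  · exact Iff.rfl
  · exact Iff.rfl

lemma adj_lift_cross {i j : ι} (hij : i ≠ j) {y1 y2} :
    (STree.node ι c g).realization.Adj (liftv c g i y1) (liftv c g j y2) ↔
      g.Adj i j ∧ y1 = Sum.inl (root (c i)) ∧ y2 = Sum.inl (root (c j)) := by
  cases y1 with
  | inl u =>
    cases y2 with
    | inl v =>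
        simp only [realization, SimpleGraph.fromRel_adj, liftv]
        constructor
        · rintro ⟨-, h | h⟩
          · obtain ⟨ha, hu, hv⟩ := (treeAdj_node_diff hij).mp h
            exact ⟨ha, by rw [hu], by rw [hv]⟩
          · obtain ⟨ha, hv, hu⟩ := (treeAdj_node_diff hij.symm).mp h
            exact ⟨ha.symm, by rw [hu], by rw [hv]⟩
        · rintro ⟨ha, h1, h2⟩
          injection h1 with h1; injection h2 with h2
          refine ⟨fun h => hij (liftv_part (y1 := Sum.inl u) (y2 := Sum.inl v) h), ?_⟩
          exact Or.inl ((treeAdj_node_diff hij).mpr ⟨ha, h1, h2⟩)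
    | inr b =>
        simp only [realization, SimpleGraph.fromRel_adj, liftv]
        constructor
        · rintro ⟨-, h | h⟩ <;> exact absurd h (onBranch_node_diff hij)
        · rintro ⟨-, -, h⟩; exact (Sum.inr_ne_inl h).elim
  | inr b =>
    cases y2 with
    | inl v =>
        simp only [realization, SimpleGraph.fromRel_adj, liftv]
        constructor
        · rintro ⟨-, h | h⟩ <;> exact absurd h (onBranch_node_diff hij.symm)
        · rintro ⟨-, h, -⟩; exact (Sum.inr_ne_inl h).elim
    | inr b' =>
        simp only [realization, SimpleGraph.fromRel_adj, liftv]
        constructor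
        · rintro ⟨-, h | h⟩ <;> exact h.elim
        · rintro ⟨-, h, -⟩; exact (Sum.inr_ne_inl h).elim

lemma adj_r_lift {i : ι} {y} :
    (STree.node ι c g).realization.Adj (Sum.inl (Sum.inl PUnit.unit)) (liftv c g i y) ↔
      (c i).realization.Adj (Sum.inl (root (c i))) y := by
  cases y with
  | inl v =>
      simp only [realization, SimpleGraph.fromRel_adj, liftv]
      constructor
      · rintro ⟨-, h | h⟩
        · exact absurd h treeAdj_node_inl_left
        · exact absurd h treeAdj_node_inl_right
      · rintro ⟨-, h | h⟩
        · exact absurd h (treeAdj_root_left _ _)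
        · exact absurd h (treeAdj_root_right _ _)
  | inr b =>
      simp only [realization, SimpleGraph.fromRel_adj, liftv]
      constructor
      · rintro -
        exact ⟨fun h => Sum.inl_ne_inr h, Or.inl (onBranch_root _ _)⟩
      · rintro -
        exact ⟨fun h => Sum.inl_ne_inr h, Or.inl onBranch_node_inl⟩

end STree


open STree in
/-- Main structural lemma: the cube does not embed into the realization of a
structured tree all of whose internal graphs are cube-free. -/
theorem no_cube_real : ∀ t : STree,
    (∀ p, t.IsInternalGraphOf p → IsEmpty (cubeGraph ↪g p.2)) →
    IsEmpty (cubeGraph ↪g t.realization) := by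
  intro t
  induction t with
  | leaf =>
      intro _
      constructor
      intro f
      have htwo : ∀ y : STree.leaf.NodeType ⊕ STree.leaf.Branch,
          y = Sum.inl PUnit.unit ∨ y = Sum.inr PUnit.unit := by
        rintro (⟨⟩ | ⟨⟩)
        · left; rfl
        · right; rfl
      rcases htwo (f (fun _ => false)) with h0 | h0 <;>
        rcases htwo (f (fun _ => true)) with h1 | h1 <;>
          rcases htwo (f (fun i => decide (i = 0))) with h2 | h2 <;>
            first
            | exact absurd (f.injective (h0.trans h1.symm)) (by decide)
            | exact absurd (f.injective (h0.trans h2.symm)) (by decide)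
            | exact absurd (f.injective (h1.trans h2.symm)) (by decide)
  | node ι c g ih =>
      intro hg
      constructor
      intro f
      classical
      have tot : ∀ x, f x = Sum.inl (Sum.inl PUnit.unit) ∨
          ∃ i y, f x = liftv c g i y := by
        intro x
        rcases hx : f x with (u | ⟨i, w⟩) | ⟨i, b⟩
        · cases u; exact Or.inl rfl
        · exact Or.inr ⟨i, Sum.inl w, rfl⟩
        · exact Or.inr ⟨i, Sum.inr b, rfl⟩
      by_cases H1 : ∀ x i y, f x = liftv c g i y → y = Sum.inl (root (c i))
      · -- every vertex in a part is the root of its subtree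
        have hnoR : ∀ x, f x ≠ Sum.inl (Sum.inl PUnit.unit) := by
          intro x hx
          obtain ⟨y, hadj⟩ := cube_exists_adj x
          have hbig := f.map_adj_iff.mpr hadj
          rcases tot y with hy | ⟨j, yv, hy⟩
          · rw [hx, hy] at hbig; exact hbig.ne rfl
          · rw [hx, hy] at hbig
            have h1 := adj_r_lift.mp hbig
            rw [H1 y j yv hy] at h1
            exact h1.ne rfl
        have hxs : ∀ x, ∃ i, f x = liftv c g i (Sum.inl (root (c i))) := by
          intro x
          rcases tot x with hx | ⟨i, y, hx⟩
          · exact absurd hx (hnoR x)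
          · exact ⟨i, by rw [hx, H1 x i y hx]⟩
        choose pt hpt using hxs
        have hptinj : Function.Injective pt := by
          intro x y hxy
          apply f.injective
          rw [hpt x, hpt y, hxy]
        have emb : cubeGraph ↪g g := by
          refine ⟨⟨pt, hptinj⟩, ?_⟩
          intro x y
          show g.Adj (pt x) (pt y) ↔ cubeGraph.Adj x y
          by_cases hxy : x = y
          · subst hxy; simp
          · have hij : pt x ≠ pt y := fun h => hxy (hptinj h)
            rw [← f.map_adj_iff, hpt x, hpt y, adj_lift_cross hij]
            simp
        exact (hg ⟨ι, g⟩ (IsInternalGraphOf.here ι c g)).false emb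
      · push_neg at H1
        obtain ⟨a, ia, ya, hfa, hyane⟩ := H1
        by_cases H2 : ∀ x, f x = Sum.inl (Sum.inl PUnit.unit) ∨ ∃ y, f x = liftv c g ia y
        · -- everything lives in part `ia` (plus possibly the global root)
          by_cases HR : (∃ x, f x = Sum.inl (Sum.inl PUnit.unit)) ∧
              (∃ x, f x = liftv c g ia (Sum.inl (root (c ia))))
          · obtain ⟨⟨xr, hxr⟩, ⟨xq, hxq⟩⟩ := HR
            refine absurd ⟨xr, xq, ?_, ?_, ?_⟩ cube_no_twins
            · intro h
              rw [h] at hxr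
              exact liftv_ne_root (hxq.symm.trans hxr)
            · intro hadj
              have hbig := f.map_adj_iff.mpr hadj
              rw [hxr, hxq] at hbig
              exact (adj_r_lift.mp hbig).ne rfl
            · intro w
              rcases H2 w with hw | ⟨yw, hw⟩
              · constructor
                · intro hadj
                  have hbig := f.map_adj_iff.mpr hadj
                  rw [hxr, hw] at hbig
                  exact (hbig.ne rfl).elim
                · intro hadj
                  have hbig := f.map_adj_iff.mpr hadj
                  rw [hxq, hw] at hbig
                  exact ((adj_r_lift.mp hbig.symm).ne rfl).elim
              · rw [← f.map_adj_iff, ← f.map_adj_iff, hxr, hxq, hw]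
                exact adj_r_lift.trans adj_lift_lift.symm
          · have hspec : ∀ x, ∃ y, f x = liftv c g ia y ∨
                (f x = Sum.inl (Sum.inl PUnit.unit) ∧ y = Sum.inl (root (c ia))) := by
              intro x
              rcases H2 x with hx | ⟨y, hx⟩
              · exact ⟨Sum.inl (root (c ia)), Or.inr ⟨hx, rfl⟩⟩
              · exact ⟨y, Or.inl hx⟩
            choose f' hf' using hspec
            have hinj : Function.Injective f' := by
              intro x y hxy
              rcases hf' x with hx | ⟨hx, hx'⟩ <;> rcases hf' y with hy | ⟨hy, hy'⟩
              · exact f.injective (by rw [hx, hy, hxy])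
              · exact absurd ⟨⟨y, hy⟩, ⟨x, by rw [hx, hxy, hy']⟩⟩ HR
              · exact absurd ⟨⟨x, hx⟩, ⟨y, by rw [hy, ← hxy, hx']⟩⟩ HR
              · exact f.injective (by rw [hx, hy])
            have hadj : ∀ x y, (c ia).realization.Adj (f' x) (f' y) ↔ cubeGraph.Adj x y := by
              intro x y
              rw [← f.map_adj_iff]
              rcases hf' x with hx | ⟨hx, hx'⟩ <;> rcases hf' y with hy | ⟨hy, hy'⟩
              · rw [hx, hy, adj_lift_lift]
              · rw [hx, hy, hy']
                exact ⟨fun h => (adj_r_lift.mpr h.symm).symm,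
                  fun h => (adj_r_lift.mp h.symm).symm⟩
              · rw [hx, hx', hy]
                exact adj_r_lift.symm
              · rw [hx, hx', hy, hy']
                simp
                exact SimpleGraph.irrefl _
            have emb : cubeGraph ↪g (c ia).realization := ⟨⟨f', hinj⟩, fun {x y} => hadj x y⟩
            exact (ih ia (fun p hp => hg p (IsInternalGraphOf.child ι c g ia p hp))).false emb
        · -- two different parts are used: contradiction via 3-connectivity
          obtain ⟨b0, hb0⟩ := not_forall.mp H2
          have hb0r : f b0 ≠ Sum.inl (Sum.inl PUnit.unit) := fun h => hb0 (Or.inl h)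
          have hb0p : ¬ ∃ y, f b0 = liftv c g ia y := fun h => hb0 (Or.inr h)
          obtain ⟨jb, yb, hb0l⟩ : ∃ j y, f b0 = liftv c g j y := by
            rcases tot b0 with h | h
            · exact absurd h hb0r
            · exact h
          have hjb : jb ≠ ia := by
            intro h; subst h; exact hb0p ⟨yb, hb0l⟩
          set z : Option (Fin 3 → Bool) :=
            if h : ∃ x, f x = Sum.inl (Sum.inl PUnit.unit) then some h.choose else none with hz
          set w : Option (Fin 3 → Bool) :=
            if h : ∃ x, f x = liftv c g ia (Sum.inl (root (c ia))) then some h.choose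
            else none with hw
          have hzu : ∀ v, f v = Sum.inl (Sum.inl PUnit.unit) → some v = z := by
            intro v hv
            have hex : ∃ x, f x = Sum.inl (Sum.inl PUnit.unit) := ⟨v, hv⟩
            rw [hz, dif_pos hex]
            exact congrArg some (f.injective (hv.trans hex.choose_spec.symm))
          have hwu : ∀ v, f v = liftv c g ia (Sum.inl (root (c ia))) → some v = w := by
            intro v hv
            have hex : ∃ x, f x = liftv c g ia (Sum.inl (root (c ia))) := ⟨v, hv⟩
            rw [hw, dif_pos hex]
            exact congrArg some (f.injective (hv.trans hex.choose_spec.symm))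
          have hzv : ∀ v, z = some v → f v = Sum.inl (Sum.inl PUnit.unit) := by
            intro v hv
            rw [hz] at hv
            by_cases hex : ∃ x, f x = Sum.inl (Sum.inl PUnit.unit)
            · rw [dif_pos hex] at hv
              rw [← Option.some.inj hv]
              exact hex.choose_spec
            · rw [dif_neg hex] at hv
              exact absurd hv.symm (Option.some_ne_none v)
          have hwv : ∀ v, w = some v → f v = liftv c g ia (Sum.inl (root (c ia))) := by
            intro v hv
            rw [hw] at hv
            by_cases hex : ∃ x, f x = liftv c g ia (Sum.inl (root (c ia)))
            · rw [dif_pos hex] at hv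
              rw [← Option.some.inj hv]
              exact hex.choose_spec
            · rw [dif_neg hex] at hv
              exact absurd hv.symm (Option.some_ne_none v)
          have haz : some a ≠ z := fun h => liftv_ne_root (hfa.symm.trans (hzv a h.symm))
          have haw : some a ≠ w :=
            fun h => hyane (liftv_inj (hfa.symm.trans (hwv a h.symm)))
          have hbz : some b0 ≠ z := fun h => liftv_ne_root (hb0l.symm.trans (hzv b0 h.symm))
          have hbw : some b0 ≠ w :=
            fun h => hjb (liftv_part (hb0l.symm.trans (hwv b0 h.symm)))
          have hreach := cube_conn z w a b0 haz haw hbz hbw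
          have key : ∀ n, ∀ x ys, f x = liftv c g ia ys → ys ≠ Sum.inl (root (c ia)) →
              creach (fun cv => some cv ≠ z ∧ some cv ≠ w) n x b0 →
              ∃ y', f b0 = liftv c g ia y' := by
            intro n
            induction n with
            | zero =>
                intro x ys hx _ hr
                have hxb : x = b0 := hr
                exact ⟨ys, hxb ▸ hx⟩
            | succ n ihn =>
                intro x ys hx hys hr
                have hr' : x = b0 ∨ ∃ cv, cubeGraph.Adj x cv ∧
                    (some cv ≠ z ∧ some cv ≠ w) ∧
                    creach (fun cv => some cv ≠ z ∧ some cv ≠ w) n cv b0 := hr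
                rcases hr' with hxb | ⟨cv, hadj, ⟨hcz, hcw⟩, hrest⟩
                · exact ⟨ys, hxb ▸ hx⟩
                · have hbig := f.map_adj_iff.mpr hadj
                  rcases tot cv with hcv | ⟨jc, yc, hcv⟩
                  · exact absurd (hzu cv hcv) hcz
                  · have hjc : jc = ia := by
                      by_contra hne
                      rw [hx, hcv] at hbig
                      have hcross := (adj_lift_cross (fun h => hne h.symm)).mp hbig
                      exact hys hcross.2.1
                    subst hjc
                    have hycne : yc ≠ Sum.inl (root (c jc)) := by
                      intro h
                      exact hcw (hwu cv (by rw [hcv, h]))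
                    exact ihn cv yc hcv hycne hrest
          obtain ⟨y', hy'⟩ := key 6 a ya hfa hyane hreach
          exact hjb (liftv_part (hb0l.symm.trans hy'))

lemma internal_mem : ∀ (L : List (Σ V : Type, SimpleGraph V)) p,
    (buildTree L).IsInternalGraphOf p → p ∈ L := by
  intro L
  induction L with
  | nil => intro p h; cases h
  | cons a L ihl =>
      obtain ⟨ι, g⟩ := a
      intro p h
      cases h with
      | here _ _ _ => exact List.mem_cons_self
      | child _ _ _ i p hp => exact List.mem_cons_of_mem _ (ihl p hp)

lemma twincut_no_cube_list : ∀ m, ∀ p ∈ twincutList m, IsEmpty (cubeGraph ↪g p.2) := by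
  intro m
  induction m with
  | zero => intro p hp; simp [twincutList] at hp
  | succ m ihm =>
      intro p hp
      rw [twincutList] at hp
      rcases List.mem_append.mp hp with h | h
      · exact ihm p h
      · rw [List.mem_singleton] at h
        subst h
        exact no_cube_real (buildTree (twincutList m))
          (fun q hq => ihm q (internal_mem _ q hq))

/-- the cube `Q₃` has no pair of non-adjacent twins and no
independent vertex cutset of size at most two; consequently it is not an
induced subgraph of any twincut graph. -/
theorem cube_not_induced_in_twincut :
    ¬ HasNonadjTwins cubeGraph ∧ ¬ HasSmallIndepCutset cubeGraph ∧
    ∀ k : ℕ, 1 ≤ k → IsEmpty (cubeGraph ↪g (twincutG k).2) := by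

  refine ⟨cube_no_twins, ?_, ?_⟩
  · rintro ⟨S, hcard, -, hncon⟩
    apply hncon
    have h3 : S.ncard = 0 ∨ S.ncard = 1 ∨ S.ncard = 2 := by omega
    obtain ⟨z, w, hcover, hzS, hwS⟩ : ∃ z w : Option (Fin 3 → Bool),
        (∀ s ∈ S, some s = z ∨ some s = w) ∧
        (∀ u : Fin 3 → Bool, z = some u → u ∈ S) ∧
        (∀ u : Fin 3 → Bool, w = some u → u ∈ S) := by
      rcases h3 with h | h | h
      · rw [Set.ncard_eq_zero (Set.toFinite S)] at h
        subst h
        exact ⟨none, none, by simp, by simp, by simp⟩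
      · rw [Set.ncard_eq_one] at h
        obtain ⟨a, rfl⟩ := h
        refine ⟨some a, some a, ?_, ?_, ?_⟩
        · intro s hs; exact Or.inl (by rw [Set.mem_singleton_iff.mp hs])
        · intro u hu; rw [Set.mem_singleton_iff, ← Option.some.inj hu]
        · intro u hu; rw [Set.mem_singleton_iff, ← Option.some.inj hu]
      · rw [Set.ncard_eq_two] at h
        obtain ⟨a, b, -, rfl⟩ := h
        refine ⟨some a, some b, ?_, ?_, ?_⟩
        · rintro s (rfl | rfl)
          · exact Or.inl rfl
          · exact Or.inr rfl
        · intro u hu; rw [← Option.some.inj hu]; exact Set.mem_insert _ _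
        · intro u hu; rw [← Option.some.inj hu]
          exact Set.mem_insert_iff.mpr (Or.inr rfl)
    refine (SimpleGraph.connected_iff _).mpr ⟨?_, ?_⟩
    · rintro ⟨x, hx⟩ ⟨y, hy⟩
      have hxz : some x ≠ z := fun h => hx (hzS x h.symm)
      have hxw : some x ≠ w := fun h => hx (hwS x h.symm)
      have hyz : some y ≠ z := fun h => hy (hzS y h.symm)
      have hyw : some y ≠ w := fun h => hy (hwS y h.symm)
      have hr := cube_conn z w x y hxz hxw hyz hyw
      have hq : ∀ cV, (some cV ≠ z ∧ some cV ≠ w) → cV ∈ Sᶜ := by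
        rintro cV ⟨h1, h2⟩ hmem
        rcases hcover cV hmem with h | h
        exacts [h1 h, h2 h]
      obtain ⟨hy', hreach⟩ := creach_reach hq 6 x y hr hx
      exact hreach
    · obtain ⟨v, hv1, hv2⟩ := cube_avoid z w
      exact ⟨⟨v, fun hmem => (hcover v hmem).elim hv1 hv2⟩⟩
  · intro k hk
    match k, hk with
    | 1, _ =>
        constructor
        intro f
        haveI : Subsingleton (twincutG 1).fst := inferInstanceAs (Subsingleton PUnit)
        exact absurd
          (f.injective (a₁ := fun _ => false) (a₂ := fun _ => true)
            (Subsingleton.elim _ _)) (by decide)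
    | (m+2), _ =>
        exact no_cube_real (buildTree (twincutList m))
          (fun q hq => twincut_no_cube_list m q (internal_mem _ q hq))
end

section
/- For every structured tree (T,g), if every graph g(v) is triangle-free, then the realization R(T,g) is triangle-free. -/
namespace STree

lemma treeAdj_irrefl : ∀ (t : STree) (u : t.NodeType), ¬ t.treeAdj u u := by
  intro t
  induction t with
  | leaf => intro u h; exact h
  | node ι c g ih =>
    rintro (u | ⟨i, u'⟩) h
    · exact h
    · rcases h with ⟨h, hadj⟩ | ⟨hadj, _, _⟩
      · exact ih i u' hadj
      · exact g.irrefl hadj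

lemma treeAdj_symm : ∀ (t : STree) (u v : t.NodeType),
    t.treeAdj u v → t.treeAdj v u := by
  intro t
  induction t with
  | leaf => intro u v h; exact h.elim
  | node ι c g ih =>
    rintro (u | ⟨i, u'⟩) (v | ⟨j, v'⟩) h
    · exact h.elim
    · exact h.elim
    · exact h.elim
    · rcases h with ⟨h, hadj⟩ | ⟨hadj, hu, hv⟩
      · subst h
        exact Or.inl ⟨rfl, ih _ _ _ hadj⟩
      · exact Or.inr ⟨g.adj_symm hadj, hv, hu⟩

lemma not_treeAdj_of_onBranch : ∀ (t : STree) (b : t.Branch) (u v : t.NodeType),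
    t.onBranch b u → t.onBranch b v → ¬ t.treeAdj u v := by
  intro t
  induction t with
  | leaf => intro _ _ _ _ _ h; exact h
  | node ι c g ih =>
    rintro ⟨k, b'⟩ (u | ⟨i, u'⟩) (v | ⟨j, v'⟩) hu hv h
    · exact h
    · exact h
    · exact h
    · obtain ⟨hi, hu'⟩ := hu
      obtain ⟨hj, hv'⟩ := hv
      subst hi
      subst hj
      rcases h with ⟨h, hadj⟩ | ⟨hadj, _, _⟩
      · exact ih _ _ _ _ hu' hv' hadj
      · exact g.irrefl hadj

lemma treeAdj_triangleFree : ∀ (t : STree),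
    (∀ p : Σ ι : Type, SimpleGraph ι, t.IsInternalGraphOf p → p.2.CliqueFree 3) →
    ∀ u v w : t.NodeType, t.treeAdj u v → t.treeAdj u w → t.treeAdj v w → False := by
  intro t
  induction t with
  | leaf => intro _ _ _ _ h; exact fun _ _ => h
  | node ι c g ih =>
    intro hg u v w huv huw hvw
    classical
    obtain (u | ⟨i, u'⟩) := u
    · exact huv
    obtain (v | ⟨j, v'⟩) := v
    · exact huv
    obtain (w | ⟨k, w'⟩) := w
    · exact huw
    rcases huv with ⟨hij, huv⟩ | ⟨hij, hu1, hv1⟩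
    · subst hij
      rcases huw with ⟨hik, huw⟩ | ⟨hik, hu2, hw2⟩
      · subst hik
        rcases hvw with ⟨hjk, hvw⟩ | ⟨hjk, hv3, hw3⟩
        · exact ih i (fun p hp => hg p (.child ι c g i p hp)) u' v' w' huv huw hvw
        · exact g.irrefl hjk
      · rcases hvw with ⟨hjk, hvw⟩ | ⟨hjk, hv3, hw3⟩
        · exact g.ne_of_adj hik hjk
        · subst hu2; subst hv3
          exact treeAdj_irrefl (c i) _ huv
    · rcases huw with ⟨hik, huw⟩ | ⟨hik, hu2, hw2⟩
      · subst hik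
        rcases hvw with ⟨hjk, hvw⟩ | ⟨hjk, hv3, hw3⟩
        · subst hjk
          exact g.irrefl hij
        · subst hu1; subst hw3
          exact treeAdj_irrefl (c i) _ huw
      · rcases hvw with ⟨hjk, hvw⟩ | ⟨hjk, hv3, hw3⟩
        · subst hjk
          subst hv1; subst hw2
          exact treeAdj_irrefl (c j) _ hvw
        · exact hg ⟨ι, g⟩ (.here ι c g) {i, j, k}
            (SimpleGraph.is3Clique_triple_iff.2 ⟨hij, hik, hjk⟩)

lemma adj_inl_inl {t : STree} {u v : t.NodeType}
    (h : t.realization.Adj (.inl u) (.inl v)) : t.treeAdj u v := by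
  rw [realization, SimpleGraph.fromRel_adj] at h
  rcases h.2 with h' | h'
  · exact h'
  · exact treeAdj_symm t v u h'

lemma adj_inl_inr {t : STree} {u : t.NodeType} {b : t.Branch}
    (h : t.realization.Adj (.inl u) (.inr b)) : t.onBranch b u := by
  rw [realization, SimpleGraph.fromRel_adj] at h
  rcases h.2 with h' | h' <;> exact h'

lemma adj_inr_inr {t : STree} {b b' : t.Branch}
    (h : t.realization.Adj (.inr b) (.inr b')) : False := by
  rw [realization, SimpleGraph.fromRel_adj] at h
  rcases h.2 with h' | h' <;> exact h'

end STree

/-- if every graph attached to an internal node of a structured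
tree is triangle-free, then its realization is triangle-free. -/
theorem realization_triangleFree (t : STree)
    (hg : ∀ p : Σ ι : Type, SimpleGraph ι, t.IsInternalGraphOf p → p.2.CliqueFree 3) :
    t.realization.CliqueFree 3 := by
  classical
  rintro s hs
  obtain ⟨x, y, z, hxy, hxz, hyz, hset⟩ := Finset.card_eq_three.mp hs.2
  have haxy : t.realization.Adj x y := hs.1 (by simp [hset]) (by simp [hset]) hxy
  have haxz : t.realization.Adj x z := hs.1 (by simp [hset]) (by simp [hset]) hxz
  have hayz : t.realization.Adj y z := hs.1 (by simp [hset]) (by simp [hset]) hyz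
  obtain (u | b) := x <;> obtain (v | b') := y <;> obtain (w | b'') := z
  · exact STree.treeAdj_triangleFree t hg u v w (STree.adj_inl_inl haxy)
      (STree.adj_inl_inl haxz) (STree.adj_inl_inl hayz)
  · exact STree.not_treeAdj_of_onBranch t b'' u v (STree.adj_inl_inr haxz)
      (STree.adj_inl_inr hayz) (STree.adj_inl_inl haxy)
  · exact STree.not_treeAdj_of_onBranch t b' u w (STree.adj_inl_inr haxy)
      (STree.adj_inl_inr (hayz.symm)) (STree.adj_inl_inl haxz)
  · exact STree.adj_inr_inr hayz
  · exact STree.not_treeAdj_of_onBranch t b v w (STree.adj_inl_inr haxy.symm)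
      (STree.adj_inl_inr haxz.symm) (STree.adj_inl_inl hayz)
  · exact STree.adj_inr_inr haxz
  · exact STree.adj_inr_inr haxy
  · exact STree.adj_inr_inr haxy
end
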